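/- Let N be a positive integer and let w : ZMod N → ℂ be nonzero. Let S = {x : ZMod N | |∑_y w(y)·conj(w(y − x))| = ‖w‖₂²}. Then S is an additive subgroup of ZMod N, and the indicator function 1_S satisfies |supp 1_S| · |supp 𝓕(1_S)| = N, i.e. 1_S is an extremal bi-partial isometry. (This is Corollary 3.12 of the paper — the spectral projection of |w ∗ R(w*)| at the value ‖w‖₂² is an extremal bi-partial isometry — specialized to L^∞(ℤ/Nℤ).) -/

import Mathlib

open Complex Finset

/-- The unitary discrete Fourier transform on `ZMod N`. -/
noncomputable def dft (N : ℕ) [NeZero N] (f : ZMod N → ℂ) : ZMod N → ℂ :=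
  fun k => (((N : ℝ) ^ (-(1/2 : ℝ)) : ℝ) : ℂ) *
    ∑ x : ZMod N, f x *
      Complex.exp (-2 * Real.pi * Complex.I * (k.val : ℂ) * (x.val : ℂ) / (N : ℂ))

/-- The `ℓ²` norm `‖f‖₂ = (∑ x, |f x|²)^(1/2)`. -/
noncomputable def l2norm (N : ℕ) [NeZero N] (f : ZMod N → ℂ) : ℝ :=
  Real.sqrt (∑ x : ZMod N, ‖f x‖ ^ 2)


noncomputable def zetaN (N : ℕ) : ℂ := Complex.exp (-2 * Real.pi * Complex.I / N)

lemma zetaN_eq_inv (N : ℕ) [NeZero N] :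
    zetaN N = (Complex.exp (2 * Real.pi * Complex.I / N))⁻¹ := by
  rw [zetaN, ← Complex.exp_neg]; congr 1; ring

lemma zetaN_primitive (N : ℕ) [NeZero N] : IsPrimitiveRoot (zetaN N) N := by
  rw [zetaN_eq_inv]
  exact (Complex.isPrimitiveRoot_exp N (NeZero.ne N)).inv

lemma zetaN_pow_eq_one_iff (N : ℕ) [NeZero N] (m : ℕ) : zetaN N ^ m = 1 ↔ N ∣ m :=
  (zetaN_primitive N).pow_eq_one_iff_dvd m

lemma zetaN_pow_mod (N : ℕ) [NeZero N] (m : ℕ) : zetaN N ^ m = zetaN N ^ (m % N) := by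
  conv_lhs => rw [← Nat.div_add_mod m N]
  rw [pow_add, pow_mul, (zetaN_pow_eq_one_iff N N).2 dvd_rfl, one_pow, one_mul]

noncomputable def eN (N : ℕ) [NeZero N] (a : ZMod N) : ℂ := zetaN N ^ a.val

lemma eN_exp (N : ℕ) [NeZero N] (k x : ZMod N) :
    Complex.exp (-2 * Real.pi * Complex.I * (k.val : ℂ) * (x.val : ℂ) / (N : ℂ)) =
      eN N (k * x) := by
  have h1 : (-2 * Real.pi * Complex.I * (k.val : ℂ) * (x.val : ℂ) / (N : ℂ)) =
      ((k.val * x.val : ℕ) : ℂ) * (-2 * Real.pi * Complex.I / N) := by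
    push_cast; ring
  rw [h1, Complex.exp_nat_mul]
  show zetaN N ^ (k.val * x.val) = eN N (k * x)
  rw [eN, ZMod.val_mul, ← zetaN_pow_mod]

lemma eN_add (N : ℕ) [NeZero N] (a b : ZMod N) : eN N (a + b) = eN N a * eN N b := by
  rw [eN, eN, eN, ZMod.val_add, ← zetaN_pow_mod, pow_add]

lemma eN_eq_one_iff (N : ℕ) [NeZero N] (a : ZMod N) : eN N a = 1 ↔ a = 0 := by
  rw [eN, zetaN_pow_eq_one_iff]
  constructor
  · intro h
    have hlt := ZMod.val_lt a
    exact (ZMod.val_eq_zero a).1 (Nat.eq_zero_of_dvd_of_lt h hlt)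
  · rintro rfl; simp

lemma l2norm_sq (N : ℕ) [NeZero N] (w : ZMod N → ℂ) :
    (Real.sqrt (∑ x : ZMod N, ‖w x‖ ^ 2)) ^ 2
      = ∑ x : ZMod N, ‖w x‖ ^ 2 :=
  Real.sq_sqrt (Finset.sum_nonneg fun _ _ => sq_nonneg _)

lemma key_iff (N : ℕ) [NeZero N] (w : ZMod N → ℂ) (hw : w ≠ 0) (x : ZMod N) :
    ‖∑ y : ZMod N, w y * (starRingEnd ℂ) (w (y - x))‖ =
        (Real.sqrt (∑ y : ZMod N, ‖w y‖ ^ 2)) ^ 2 ↔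
      ∃ c : ℂ, ‖c‖ = 1 ∧ ∀ y, w (y - x) = c * w y := by
  classical
  let u : EuclideanSpace ℂ (ZMod N) := WithLp.toLp 2 w
  let v : EuclideanSpace ℂ (ZMod N) := WithLp.toLp 2 (fun y => w (y - x))
  have hu_app : ∀ y, u y = w y := fun _ => rfl
  have hv_app : ∀ y, v y = w (y - x) := fun _ => rfl
  have hnormu : ‖u‖ ^ 2 = ∑ y : ZMod N, ‖w y‖ ^ 2 := by
    rw [EuclideanSpace.norm_eq, Real.sq_sqrt (Finset.sum_nonneg fun _ _ => sq_nonneg _)]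
  have hsum : ∑ y : ZMod N, ‖w (y - x)‖ ^ 2
      = ∑ y : ZMod N, ‖w y‖ ^ 2 :=
    Equiv.sum_comp (Equiv.subRight x) (fun y => ‖w y‖ ^ 2)
  have hnormv : ‖v‖ = ‖u‖ := by
    rw [EuclideanSpace.norm_eq, EuclideanSpace.norm_eq]
    simp only [hu_app, hv_app]
    exact congrArg Real.sqrt hsum
  have hu0 : u ≠ 0 := by
    intro h; apply hw; funext y
    have := congrFun (congrArg (fun f : EuclideanSpace ℂ (ZMod N) => (f : ZMod N → ℂ)) h) y
    exact this
  have hv0 : v ≠ 0 := by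
    intro h
    apply hu0
    ext y
    have h1 : v (y + x) = 0 := by rw [h]; rfl
    rw [hv_app] at h1
    show w y = 0
    simpa using h1
  have hinner : (∑ y : ZMod N, w y * (starRingEnd ℂ) (w (y - x)))
      = (starRingEnd ℂ) (inner ℂ u v : ℂ) := by
    rw [PiLp.inner_apply, map_sum]
    congr 1; funext y
    simp [RCLike.inner_apply, hu_app, hv_app, mul_comm]
  have habs : ‖∑ y : ZMod N, w y * (starRingEnd ℂ) (w (y - x))‖
      = ‖(inner ℂ u v : ℂ)‖ := by
    rw [hinner, Complex.norm_conj]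
  have hE : (Real.sqrt (∑ y : ZMod N, ‖w y‖ ^ 2)) ^ 2 = ‖u‖ * ‖v‖ := by
    rw [l2norm_sq, ← hnormu, hnormv, sq]
  rw [habs, hE]
  constructor
  · intro h
    obtain ⟨r, hr0, hvu⟩ := (norm_inner_eq_norm_iff hu0 hv0).1 h
    refine ⟨r, ?_, ?_⟩
    · have h1 : ‖v‖ = ‖r‖ * ‖u‖ := by rw [hvu, norm_smul]
      rw [hnormv] at h1
      have hu' : ‖u‖ ≠ 0 := norm_ne_zero_iff.2 hu0
      have h2 : ‖r‖ * ‖u‖ = 1 * ‖u‖ := by rw [← h1, one_mul]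
      have h3 : ‖r‖ = 1 := mul_right_cancel₀ hu' h2
      exact h3
    · intro y
      have h4 : v y = (r • u) y := by rw [hvu]
      show w (y - x) = r * w y
      simpa [PiLp.smul_apply, smul_eq_mul, hu_app, hv_app] using h4
  · rintro ⟨c, hc1, hc⟩
    have hvu : v = c • u := by
      ext y
      show v y = c * u y
      simp only [hu_app, hv_app]
      exact hc y
    have hiv : (inner ℂ u v : ℂ) = c * (‖u‖ : ℂ) ^ 2 := by
      rw [hvu, inner_smul_right, inner_self_eq_norm_sq_to_K]
      norm_num
    rw [hiv, norm_mul, norm_pow, Complex.norm_real, Real.norm_of_nonneg (norm_nonneg u),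
      hc1, one_mul, hnormv, sq]

lemma exists_generator' (N : ℕ) [NeZero N] (H : AddSubgroup (ZMod N)) :
    ∃ g : ZMod N, H = AddSubgroup.zmultiples g := by
  obtain ⟨⟨g, hgH⟩, hg⟩ := IsAddCyclic.exists_generator (α := H)
  refine ⟨g, le_antisymm ?_ ?_⟩
  · intro x hx
    obtain ⟨n, hn⟩ := hg ⟨x, hx⟩
    exact ⟨n, by simpa using congrArg Subtype.val hn⟩
  · exact (AddSubgroup.zmultiples_le).2 hgH
lemma sub_mem_iff' {N : ℕ} (H : AddSubgroup (ZMod N)) {x₀ : ZMod N} (h₀ : x₀ ∈ H)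
    (x : ZMod N) : x - x₀ ∈ H ↔ x ∈ H := by
  constructor
  · intro h; simpa using H.add_mem h h₀
  · intro h; exact H.sub_mem h h₀

lemma dft_indicator_support (N : ℕ) [NeZero N] (H : AddSubgroup (ZMod N)) :
    Function.support (dft N (Set.indicator (H : Set (ZMod N)) (fun _ => (1:ℂ))))
      = {k : ZMod N | ∀ x ∈ H, k * x = 0} := by
  classical
  have hNpos : (0:ℝ) < (N:ℝ) := by exact_mod_cast Nat.pos_of_ne_zero (NeZero.ne N)
  have hc : (((N : ℝ) ^ (-(1/2 : ℝ)) : ℝ) : ℂ) ≠ 0 := by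
    simp only [ne_eq, Complex.ofReal_eq_zero]
    exact (Real.rpow_ne_zero hNpos.le (by norm_num)).2 hNpos.ne'
  have hdft : ∀ k, dft N (Set.indicator (H : Set (ZMod N)) (fun _ => (1:ℂ))) k
      = (((N : ℝ) ^ (-(1/2 : ℝ)) : ℝ) : ℂ) *
        ∑ x : ZMod N, Set.indicator (H : Set (ZMod N)) (fun _ => (1:ℂ)) x * eN N (k * x) := by
    intro k
    rw [dft]
    congr 1
    refine Finset.sum_congr rfl fun x _ => ?_
    rw [eN_exp]
  ext k
  simp only [Function.mem_support, hdft, mul_ne_zero_iff, Set.mem_setOf_eq]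
  rw [and_iff_right hc]
  set S := ∑ x : ZMod N, Set.indicator (H : Set (ZMod N)) (fun _ => (1:ℂ)) x * eN N (k * x)
    with hS
  constructor
  · intro hne x hx
    by_contra hkx
    -- shift argument: S = eN (k*x) * S
    have hshift : eN N (k * x) * S = S := by
      have e1 : eN N (k * x) * S
          = ∑ z : ZMod N, Set.indicator (H : Set (ZMod N)) (fun _ => (1:ℂ)) z
              * eN N (k * (x + z)) := by
        rw [hS, Finset.mul_sum]
        refine Finset.sum_congr rfl fun z _ => ?_
        rw [mul_add, eN_add]
        ring
      have e2 : ∑ z : ZMod N, Set.indicator (H : Set (ZMod N)) (fun _ => (1:ℂ)) z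
              * eN N (k * (x + z))
          = ∑ t : ZMod N, Set.indicator (H : Set (ZMod N)) (fun _ => (1:ℂ)) (t - x)
              * eN N (k * t) :=
        Fintype.sum_equiv (Equiv.addLeft x) _ _ (fun z => by simp)
      have e3 : ∑ t : ZMod N, Set.indicator (H : Set (ZMod N)) (fun _ => (1:ℂ)) (t - x)
              * eN N (k * t) = S := by
        rw [hS]
        refine Finset.sum_congr rfl fun t _ => ?_
        congr 1
        simp only [Set.indicator_apply, SetLike.mem_coe, sub_mem_iff' H hx]
      rw [e1, e2, e3]
    have hS0 : (eN N (k * x) - 1) * S = 0 := by rw [sub_mul, hshift, one_mul, sub_self]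
    rcases mul_eq_zero.1 hS0 with h | h
    · exact hkx ((eN_eq_one_iff N (k * x)).1 (by linear_combination h))
    · exact hne h
  · intro hall
    have : S = (Nat.card H : ℂ) := by
      rw [hS]
      have h1 : ∀ z : ZMod N,
          Set.indicator (H : Set (ZMod N)) (fun _ => (1:ℂ)) z * eN N (k * z)
          = if z ∈ H then 1 else 0 := by
        intro z
        by_cases hz : z ∈ H
        · rw [hall z hz]
          simp [Set.indicator_apply, hz, eN, ZMod.val_zero]
        · simp [Set.indicator_apply, hz]
      rw [Finset.sum_congr rfl fun z _ => h1 z, Finset.sum_boole,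
        Nat.card_eq_fintype_card, Fintype.card_subtype]
    rw [this]
    have : 0 < Nat.card H := Nat.card_pos
    exact_mod_cast Nat.pos_iff_ne_zero.1 this

lemma card_mul_card (N : ℕ) [NeZero N] (g : ZMod N) :
    Nat.card {k : ZMod N | k * g = 0} * Nat.card (AddSubgroup.zmultiples g) = N := by
  classical
  set ψ : ZMod N →+ ZMod N := AddMonoidHom.mulRight g with hψ
  have hker : {k : ZMod N | k * g = 0} = (ψ.ker : Set (ZMod N)) := by
    ext k; simp [hψ, AddMonoidHom.mem_ker, AddMonoidHom.mulRight_apply]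
  have hrange : ψ.range = AddSubgroup.zmultiples g := by
    ext k
    simp only [AddMonoidHom.mem_range, AddSubgroup.mem_zmultiples_iff]
    constructor
    · rintro ⟨a, rfl⟩
      refine ⟨(a.val : ℤ), ?_⟩
      rw [zsmul_eq_mul, AddMonoidHom.mulRight_apply]
      norm_cast
      simp [ZMod.natCast_val, ZMod.cast_id]
    · rintro ⟨n, rfl⟩
      refine ⟨(n : ZMod N), ?_⟩
      rw [AddMonoidHom.mulRight_apply, zsmul_eq_mul]
  have h1 : Nat.card (ZMod N) = Nat.card (ZMod N ⧸ ψ.ker) * Nat.card ψ.ker :=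
    AddSubgroup.card_eq_card_quotient_mul_card_addSubgroup ψ.ker
  have h2 : Nat.card (ZMod N ⧸ ψ.ker) = Nat.card ψ.range :=
    Nat.card_congr (QuotientAddGroup.quotientKerEquivRange ψ).toEquiv
  have h3 : Nat.card {k : ZMod N | k * g = 0} = Nat.card ψ.ker := by
    rw [hker]; rfl
  rw [h3, ← hrange, mul_comm, ← h2, ← h1, Nat.card_zmod]

/-- The set where the autocorrelation of a nonzero w attains its maximal value
‖w‖₂² is a subgroup of ZMod N, and its indicator function is an extremal
bi-partial isometry, i.e. a minimizer of the Donoho–Stark uncertainty principle. -/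
theorem spectral_projection_extremal (N : ℕ) [NeZero N] (w : ZMod N → ℂ)
    (hw : w ≠ 0) :
    (∃ H : AddSubgroup (ZMod N),
        {x : ZMod N | ‖∑ y : ZMod N, w y * (starRingEnd ℂ) (w (y - x))‖ =
          l2norm N w ^ 2} = (H : Set (ZMod N))) ∧
      (Function.support
          (Set.indicator {x : ZMod N |
            ‖∑ y : ZMod N, w y * (starRingEnd ℂ) (w (y - x))‖ =
              l2norm N w ^ 2} (fun _ => (1 : ℂ)))).ncard *
        (Function.support (dft N
          (Set.indicator {x : ZMod N |
            ‖∑ y : ZMod N, w y * (starRingEnd ℂ) (w (y - x))‖ =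
              l2norm N w ^ 2} (fun _ => (1 : ℂ))))).ncard = N := by
  classical
  set S : Set (ZMod N) :=
    {x : ZMod N | ‖∑ y : ZMod N, w y * (starRingEnd ℂ) (w (y - x))‖ =
      l2norm N w ^ 2} with hSdef
  have hSP : ∀ x, x ∈ S ↔ ∃ c : ℂ, ‖c‖ = 1 ∧ ∀ y, w (y - x) = c * w y := by
    intro x
    rw [hSdef]
    simp only [Set.mem_setOf_eq, l2norm]
    exact key_iff N w hw x
  let H₀ : AddSubgroup (ZMod N) :=
  { carrier := S
    zero_mem' := (hSP 0).2 ⟨1, by simp, fun y => by simp⟩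
    add_mem' := by
      intro a b ha hb
      obtain ⟨ca, hca1, hca⟩ := (hSP a).1 ha
      obtain ⟨cb, hcb1, hcb⟩ := (hSP b).1 hb
      refine (hSP (a + b)).2 ⟨ca * cb, by simp [map_mul, hca1, hcb1], fun y => ?_⟩
      have h1 : y - (a + b) = (y - b) - a := by ring
      rw [h1, hca, hcb]
      ring
    neg_mem' := by
      intro a ha
      obtain ⟨c, hc1, hc⟩ := (hSP a).1 ha
      have hc0 : c ≠ 0 := by
        intro h; rw [h] at hc1; simp at hc1
      refine (hSP (-a)).2 ⟨c⁻¹, by rw [norm_inv, hc1]; norm_num, fun y => ?_⟩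
      have h2 := hc (y + a)
      rw [add_sub_cancel_right] at h2
      rw [sub_neg_eq_add, h2]
      field_simp }
  have hSeq : S = (H₀ : Set (ZMod N)) := rfl
  obtain ⟨g, hg⟩ := exists_generator' N H₀
  have hgmem : g ∈ H₀ := by
    rw [hg]; exact AddSubgroup.mem_zmultiples g
  have hsupp1 : Function.support (Set.indicator S (fun _ => (1 : ℂ))) = S := by
    rw [Set.support_indicator]
    have : Function.support (fun _ : ZMod N => (1 : ℂ)) = Set.univ := by
      ext t; simp
    rw [this, Set.inter_univ]
  have hsupp2 : Function.support (dft N (Set.indicator S (fun _ => (1 : ℂ))))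
      = {k : ZMod N | k * g = 0} := by
    rw [hSeq, dft_indicator_support N H₀]
    ext k
    simp only [Set.mem_setOf_eq]
    constructor
    · intro h; exact h g hgmem
    · intro h x hx
      rw [hg] at hx
      obtain ⟨n, rfl⟩ := hx
      show k * (n • g) = 0
      rw [zsmul_eq_mul]
      calc k * ((n : ZMod N) * g) = (n : ZMod N) * (k * g) := by ring
      _ = 0 := by rw [h, mul_zero]
  constructor
  · exact ⟨H₀, hSeq⟩
  · rw [hsupp1, hsupp2, hSeq]
    rw [← Nat.card_coe_set_eq, ← Nat.card_coe_set_eq]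
    have h1 : Nat.card (H₀ : Set (ZMod N)) = Nat.card (AddSubgroup.zmultiples g) := by
      rw [hg]; rfl
    rw [h1, mul_comm]
    exact card_mul_card N g
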